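/- Let W be a right infinite word on a finite alphabet and let A_W be the monomial algebra over a field k whose basis (together with 1) is the set of finite subwords of W, with multiplication given by concatenation when the concatenation is a subword of W and zero otherwise. Then A_W is a prime ring if and only if W is prime (every subword occurs infinitely often). -/

import Mathlib

/-- The factor (subword) of the right infinite word `W` starting at position `i`, of length `n`. -/
def FactorAt {X : Type*} (W : ℕ → X) (i n : ℕ) : List X :=
  (List.range n).map fun k => W (i + k)

/-- The finite word `u` occurs in `W` at position `i`. -/
def OccursAt {X : Type*} (W : ℕ → X) (u : List X) (i : ℕ) : Prop :=
  FactorAt W i u.length = u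

/-- `u` is a (finite) subword of the right infinite word `W`. -/
def IsFactor {X : Type*} (W : ℕ → X) (u : List X) : Prop :=
  ∃ i, OccursAt W u i

/-- A right infinite word is prime if every finite subword occurs infinitely often. -/
def IsPrimeWord {X : Type*} (W : ℕ → X) : Prop :=
  ∀ u, IsFactor W u → ∀ N, ∃ i, N ≤ i ∧ OccursAt W u i

/-- `W` is ultimately periodic. -/
def UltPeriodic {X : Type*} (W : ℕ → X) : Prop :=
  ∃ N p, 1 ≤ p ∧ ∀ i, N ≤ i → W (i + p) = W i

/-- `k`-fold concatenation power of a finite word. -/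
def wpow {X : Type*} (w : List X) (k : ℕ) : List X := (List.replicate k w).flatten

/-- The periodic right infinite word `w^ω`. -/
def perWord {X : Type*} [Inhabited X] (w : List X) : ℕ → X :=
  fun n => w.getD (n % w.length) default

/-- The right infinite word `w₁ w₂^ω`. -/
def glueWord {X : Type*} [Inhabited X] (w₁ w₂ : List X) : ℕ → X := fun n =>
  if n < w₁.length then w₁.getD n default
  else w₂.getD ((n - w₁.length) % w₂.length) default

/-- The right infinite word obtained by prefixing `U` with the finite word `w`. -/
def prependWord {X : Type*} (w : List X) (U : ℕ → X) : ℕ → X := fun n =>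
  if n < w.length then w.getD n (U 0) else U (n - w.length)

/-- The finite word `w` is a prefix of the right infinite word `U`. -/
def HasPrefixWord {X : Type*} (U : ℕ → X) (w : List X) : Prop :=
  FactorAt U 0 w.length = w


/-- The image of a finite word in the free algebra: the product of its letters. -/
noncomputable def wordToAlg (k : Type*) [CommRing k] {X : Type*} (w : List X) :
    FreeAlgebra k X :=
  (w.map (FreeAlgebra.ι k)).prod

/-- The relations defining the monomial algebra of a right infinite word `W`: every
finite word that is not a subword of `W` is set to zero. -/
def monomialRel (k : Type*) [CommRing k] {X : Type*} (W : ℕ → X) :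
    FreeAlgebra k X → FreeAlgebra k X → Prop :=
  fun a b => ∃ w : List X, ¬ IsFactor W w ∧ a = wordToAlg k w ∧ b = 0

/-- The monomial algebra `A_W` of a right infinite word `W`. -/
abbrev MonomialAlgebra (k : Type*) [CommRing k] {X : Type*} (W : ℕ → X) :=
  RingQuot (monomialRel k W)

section WordLemmas
variable {X : Type*} (W : ℕ → X)

theorem factorAt_length (i n : ℕ) : (FactorAt W i n).length = n := by
  simp [FactorAt]

theorem factorAt_add (i m n : ℕ) :
    FactorAt W i (m + n) = FactorAt W i m ++ FactorAt W (i + m) n := by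
  simp only [FactorAt, List.range_add, List.map_append, List.map_map]
  congr 1
  ext j
  simp [Function.comp, Nat.add_assoc, Nat.add_comm m j]

theorem occursAt_factorAt (i n : ℕ) : OccursAt W (FactorAt W i n) i := by
  rw [OccursAt, factorAt_length]

theorem occursAt_append {u v : List X} {i : ℕ} (h : OccursAt W (u ++ v) i) :
    OccursAt W u i ∧ OccursAt W v (i + u.length) := by
  rw [OccursAt, List.length_append, factorAt_add] at h
  have := List.append_inj h (by rw [factorAt_length])
  exact ⟨this.1, this.2⟩

theorem isFactor_nil : IsFactor W [] := ⟨0, by simp [OccursAt, FactorAt]⟩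

theorem isFactor_of_append_left {u v : List X} (h : IsFactor W (u ++ v)) : IsFactor W u := by
  obtain ⟨i, hi⟩ := h
  exact ⟨i, (occursAt_append W hi).1⟩

theorem isFactor_of_append_right {u v : List X} (h : IsFactor W (u ++ v)) : IsFactor W v := by
  obtain ⟨i, hi⟩ := h
  exact ⟨i + u.length, (occursAt_append W hi).2⟩

end WordLemmas

section Alg
variable {X : Type*} (W : ℕ → X) (k : Type*) [Field k]

open Finsupp

/-- The truncated monomial: `single w 1` if `w` is a factor of `W`, else `0`. -/
noncomputable def trunc (w : List X) : List X →₀ k :=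
  open Classical in if IsFactor W w then Finsupp.single w 1 else 0

theorem trunc_of_factor {w : List X} (h : IsFactor W w) : trunc W k w = single w 1 := if_pos h
theorem trunc_of_nonfactor {w : List X} (h : ¬ IsFactor W w) : trunc W k w = 0 := if_neg h

theorem factor_of_trunc_ne {w : List X} (h : trunc W k w ≠ 0) : IsFactor W w := by
  by_contra hf; exact h (trunc_of_nonfactor W k hf)

/-- Truncated left multiplication by the word `u`, as an endomorphism of `List X →₀ k`. -/
noncomputable def Lmul (u : List X) : Module.End k (List X →₀ k) :=
  Finsupp.lsum k fun w => LinearMap.toSpanSingleton k _ (trunc W k (u ++ w))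

theorem Lmul_single (u w : List X) (c : k) :
    Lmul W k u (single w c) = c • trunc W k (u ++ w) := by
  simp [Lmul, LinearMap.toSpanSingleton_apply]

theorem Lmul_trunc (u w : List X) :
    Lmul W k u (trunc W k w) = trunc W k (u ++ w) := by
  by_cases h : IsFactor W w
  · rw [trunc_of_factor W k h, Lmul_single, one_smul]
  · rw [trunc_of_nonfactor W k h, map_zero, trunc_of_nonfactor]
    exact fun hf => h (isFactor_of_append_right W hf)

theorem Lmul_mul (u v : List X) : Lmul W k u * Lmul W k v = Lmul W k (u ++ v) := by
  apply Finsupp.lhom_ext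
  intro w c
  show Lmul W k u (Lmul W k v (single w c)) = _
  rw [Lmul_single, map_smul, Lmul_trunc, Lmul_single, List.append_assoc]

theorem Lmul_of_nonfactor {u : List X} (h : ¬ IsFactor W u) : Lmul W k u = 0 := by
  apply Finsupp.lhom_ext
  intro w c
  rw [Lmul_single, trunc_of_nonfactor, smul_zero, LinearMap.zero_apply]
  exact fun hf => h (isFactor_of_append_left W hf)

/-- The regular representation of the free algebra on `List X →₀ k` by truncated
left multiplication. -/
noncomputable def phi : FreeAlgebra k X →ₐ[k] Module.End k (List X →₀ k) :=
  FreeAlgebra.lift k fun x => Lmul W k [x]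

theorem wordToAlg_nil : wordToAlg k ([] : List X) = 1 := rfl

theorem wordToAlg_cons (x : X) (u : List X) :
    wordToAlg k (x :: u) = FreeAlgebra.ι k x * wordToAlg k u := by
  simp [wordToAlg]

theorem wordToAlg_append (u v : List X) :
    wordToAlg k (u ++ v) = wordToAlg k u * wordToAlg k v := by
  simp [wordToAlg]

theorem phi_word {u : List X} (h : u ≠ []) : phi W k (wordToAlg k u) = Lmul W k u := by
  induction u with
  | nil => exact absurd rfl h
  | cons x t ih =>
    rw [wordToAlg_cons, map_mul]
    have hx : phi W k (FreeAlgebra.ι k x) = Lmul W k [x] := FreeAlgebra.lift_ι_apply _ _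
    by_cases ht : t = []
    · subst ht
      rw [hx, wordToAlg_nil, map_one, mul_one]
    · rw [hx, ih ht, Lmul_mul]
      rfl

theorem phi_rel {a b : FreeAlgebra k X} (h : monomialRel k W a b) : phi W k a = phi W k b := by
  obtain ⟨w, hw, rfl, rfl⟩ := h
  have hne : w ≠ [] := fun h' => hw (h' ▸ isFactor_nil W)
  rw [phi_word W k hne, Lmul_of_nonfactor W k hw, map_zero]

/-- The regular representation of the monomial algebra. -/
noncomputable def rho : MonomialAlgebra k W →ₐ[k] Module.End k (List X →₀ k) :=
  RingQuot.liftAlgHom k ⟨phi W k, fun _ _ h => phi_rel W k h⟩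

/-- The image of a word in the monomial algebra. -/
noncomputable def mkw (u : List X) : MonomialAlgebra k W :=
  RingQuot.mkAlgHom k (monomialRel k W) (wordToAlg k u)

theorem mkw_nil : mkw W k ([] : List X) = 1 := by
  rw [mkw, wordToAlg_nil, map_one]

theorem mkw_mul (u v : List X) : mkw W k u * mkw W k v = mkw W k (u ++ v) := by
  rw [mkw, mkw, mkw, ← map_mul, wordToAlg_append]

theorem mkw_of_nonfactor {u : List X} (h : ¬ IsFactor W u) : mkw W k u = 0 := by
  have hrel : monomialRel k W (wordToAlg k u) 0 := ⟨u, h, rfl, rfl⟩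
  have h2 := RingQuot.mkAlgHom_rel (S := k) hrel
  rw [map_zero] at h2
  exact h2

theorem rho_mkw {u : List X} (h : u ≠ []) : rho W k (mkw W k u) = Lmul W k u := by
  rw [rho, mkw, RingQuot.liftAlgHom_mkAlgHom_apply, phi_word W k h]

/-- Evaluation of the representation at the empty word: the "normal form" of an element. -/
noncomputable def ev : MonomialAlgebra k W →ₗ[k] (List X →₀ k) :=
  (LinearMap.applyₗ (single ([] : List X) (1 : k))).comp (rho W k).toLinearMap

theorem ev_apply (a : MonomialAlgebra k W) :
    ev W k a = rho W k a (single ([] : List X) (1 : k)) := rfl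

theorem ev_mkw (u : List X) : ev W k (mkw W k u) = trunc W k u := by
  by_cases h : u = []
  · subst h
    rw [ev_apply, mkw_nil, map_one, trunc_of_factor W k (isFactor_nil W)]
    rfl
  · rw [ev_apply, rho_mkw W k h, Lmul_single, one_smul, List.append_nil]

theorem ev_mul (x y : MonomialAlgebra k W) : ev W k (x * y) = rho W k x (ev W k y) := by
  rw [ev_apply, ev_apply, map_mul]
  rfl

theorem mem_span_mkw (a : MonomialAlgebra k W) :
    a ∈ Submodule.span k (Set.range (mkw W k)) := by
  obtain ⟨y, rfl⟩ := RingQuot.mkAlgHom_surjective k (monomialRel k W) a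
  induction y with
  | grade0 r =>
    rw [AlgHom.commutes, Algebra.algebraMap_eq_smul_one, ← mkw_nil W k]
    exact Submodule.smul_mem _ _ (Submodule.subset_span ⟨[], rfl⟩)
  | grade1 x =>
    have : RingQuot.mkAlgHom k (monomialRel k W) (FreeAlgebra.ι k x) = mkw W k [x] := by
      rw [mkw]; congr 1; simp [wordToAlg]
    rw [this]
    exact Submodule.subset_span ⟨[x], rfl⟩
  | mul a b ha hb =>
    rw [map_mul]
    have hle : Submodule.span k (Set.range (mkw W k)) * Submodule.span k (Set.range (mkw W k)) ≤
        Submodule.span k (Set.range (mkw W k)) := by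
      rw [Submodule.span_mul_span]
      refine Submodule.span_le.2 ?_
      rintro _ ⟨_, ⟨u, rfl⟩, _, ⟨v, rfl⟩, rfl⟩
      exact Submodule.subset_span ⟨u ++ v, (mkw_mul W k u v).symm⟩
    exact hle (Submodule.mul_mem_mul ha hb)
  | add a b ha hb =>
    rw [map_add]; exact Submodule.add_mem _ ha hb

theorem iota_ev (a : MonomialAlgebra k W) :
    Finsupp.linearCombination k (mkw W k) (ev W k a) = a := by
  induction mem_span_mkw W k a using Submodule.span_induction with
  | mem x hx =>
    obtain ⟨u, rfl⟩ := hx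
    rw [ev_mkw]
    by_cases h : IsFactor W u
    · rw [trunc_of_factor W k h, Finsupp.linearCombination_single, one_smul]
    · rw [trunc_of_nonfactor W k h, map_zero, mkw_of_nonfactor W k h]
  | zero => rw [map_zero, map_zero]
  | add x y hx hy ihx ihy => rw [map_add, map_add, ihx, ihy]
  | smul c x hx ih => rw [map_smul, map_smul, ih]

theorem ev_ne_zero {a : MonomialAlgebra k W} (h : a ≠ 0) : ev W k a ≠ 0 := by
  intro h0
  exact h (by rw [← iota_ev W k a, h0, map_zero])

theorem supp_ev (a : MonomialAlgebra k W) :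
    ∀ w ∈ (ev W k a).support, IsFactor W w := by
  classical
  induction mem_span_mkw W k a using Submodule.span_induction with
  | mem x hx =>
    obtain ⟨u, rfl⟩ := hx
    rw [ev_mkw]
    by_cases h : IsFactor W u
    · rw [trunc_of_factor W k h]
      intro w hw
      rw [Finset.mem_singleton.1 (Finsupp.support_single_subset hw)]
      exact h
    · rw [trunc_of_nonfactor W k h]; simp
  | zero => rw [map_zero]; simp
  | add x y hx hy ihx ihy =>
    rw [map_add]
    intro w hw
    rcases Finset.mem_union.1 (Finsupp.support_add hw) with h | h
    · exact ihx w h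
    · exact ihy w h
  | smul c x hx ih =>
    rw [map_smul]
    intro w hw
    exact ih w (Finsupp.support_smul hw)

theorem rho_mkw_single (u : List X) {w : List X} (c : k) (hw : IsFactor W w) :
    rho W k (mkw W k u) (single w c) = c • trunc W k (u ++ w) := by
  by_cases h : u = []
  · subst h
    rw [mkw_nil, map_one, List.nil_append, trunc_of_factor W k hw]
    show single w c = c • single w 1
    classical
    rw [Finsupp.smul_single, smul_eq_mul, mul_one]
  · rw [rho_mkw W k h, Lmul_single]

theorem rho_mkw_apply (u : List X) (f : List X →₀ k)
    (hf : ∀ w ∈ f.support, IsFactor W w) :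
    rho W k (mkw W k u) f = f.sum fun w c => c • trunc W k (u ++ w) := by
  conv_lhs => rw [← Finsupp.sum_single f]
  rw [map_finsuppSum]
  exact Finset.sum_congr rfl fun w hw => rho_mkw_single W k u (f w) (hf w hw)

theorem mkw_ne_zero_of_factor {u : List X} (h : IsFactor W u) : mkw W k u ≠ 0 := by
  intro h0
  have h1 := ev_mkw W k u
  rw [h0, map_zero, trunc_of_factor W k h] at h1
  exact one_ne_zero (α := k) (Finsupp.single_eq_zero.1 h1.symm)

end Alg


/-- The monomial algebra `A_W` of a right infinite word `W` over a finite alphabet is a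
prime ring if and only if `W` is prime (every subword of `W` occurs infinitely often). -/
theorem monomialAlgebra_prime_iff {k : Type*} [Field k] {X : Type*} [Fintype X]
    (W : ℕ → X) :
    (∀ a b : MonomialAlgebra k W, a ≠ 0 → b ≠ 0 → ∃ r : MonomialAlgebra k W,
        a * r * b ≠ 0) ↔ IsPrimeWord W := by
  classical
  constructor
  · -- prime ring implies prime word
    intro H u hu N
    set p := FactorAt W 0 N with hp
    have hpfac : IsFactor W p := ⟨0, occursAt_factorAt W 0 N⟩
    have hplen : p.length = N := factorAt_length W 0 N
    obtain ⟨r, hr⟩ := H (mkw W k p) (mkw W k u)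
      (mkw_ne_zero_of_factor W k hpfac) (mkw_ne_zero_of_factor W k hu)
    set R := ev W k r with hR
    have h1 : mkw W k p * r * mkw W k u = R.sum fun s c => c • mkw W k ((p ++ s) ++ u) := by
      conv_lhs => rw [← iota_ev W k r, Finsupp.linearCombination_apply]
      rw [Finsupp.sum, Finsupp.sum, Finset.mul_sum, Finset.sum_mul]
      refine Finset.sum_congr rfl fun s _ => ?_
      rw [mul_smul_comm, smul_mul_assoc, mkw_mul, mkw_mul]
    have h2 : ev W k (mkw W k p * r * mkw W k u) =
        R.sum fun s c => c • trunc W k ((p ++ s) ++ u) := by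
      rw [h1, Finsupp.sum, map_sum, Finsupp.sum]
      refine Finset.sum_congr rfl fun s _ => ?_
      rw [map_smul, ev_mkw]
    have h3 := ev_ne_zero W k hr
    rw [h2, Finsupp.sum] at h3
    have h4 : ∃ s ∈ R.support, R s • trunc W k ((p ++ s) ++ u) ≠ 0 := by
      by_contra hall
      push_neg at hall
      exact h3 (Finset.sum_eq_zero hall)
    obtain ⟨s, _, hs⟩ := h4
    have hfac : IsFactor W ((p ++ s) ++ u) :=
      factor_of_trunc_ne W k fun h0 => hs (by rw [h0, smul_zero])
    obtain ⟨i, hi⟩ := hfac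
    refine ⟨i + (p ++ s).length, ?_, (occursAt_append W hi).2⟩
    rw [List.length_append, hplen]
    omega
  · -- prime word implies prime ring
    intro hW a b ha hb
    set A := ev W k a with hA'
    set B := ev W k b with hB'
    have hA : A ≠ 0 := ev_ne_zero W k ha
    have hB : B ≠ 0 := ev_ne_zero W k hb
    obtain ⟨u, hu_mem, hu_max⟩ :=
      A.support.exists_max_image List.length (Finsupp.support_nonempty_iff.2 hA)
    obtain ⟨v, hv_mem, hv_max⟩ :=
      B.support.exists_max_image List.length (Finsupp.support_nonempty_iff.2 hB)
    have hufac : IsFactor W u := supp_ev W k a u hu_mem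
    have hvfac : IsFactor W v := supp_ev W k b v hv_mem
    obtain ⟨i, hi⟩ := hufac
    obtain ⟨j, hjN, hj⟩ := hW v hvfac (i + u.length)
    set m := j - (i + u.length) with hm
    set mid := FactorAt W (i + u.length) m with hmid
    have hmidlen : mid.length = m := factorAt_length _ _ _
    have humid : OccursAt W (u ++ mid) i := by
      rw [OccursAt, List.length_append, hmidlen, factorAt_add, hi, hmid]
    have hw0 : OccursAt W ((u ++ mid) ++ v) i := by
      rw [OccursAt] at humid hj ⊢
      rw [List.length_append, factorAt_add, humid]
      have h1 : i + (u ++ mid).length = j := by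
        rw [List.length_append, hmidlen]
        omega
      rw [h1, hj]
    have hw0fac : IsFactor W ((u ++ mid) ++ v) := ⟨i, hw0⟩
    have hmvfac : IsFactor W (mid ++ v) := by
      have h1 : (u ++ mid) ++ v = u ++ (mid ++ v) := List.append_assoc u mid v
      exact isFactor_of_append_right W (h1 ▸ hw0fac)
    -- key combinatorial fact, from the maximality of `u` and `v`
    have key : ∀ u' v' : List X, u'.length ≤ u.length → v'.length ≤ v.length →
        u' ++ (mid ++ v') = (u ++ mid) ++ v → u' = u ∧ v' = v := by
      intro u' v' h1 h2 heq
      rw [List.append_assoc] at heq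
      have hlen : u'.length + (mid.length + v'.length)
          = u.length + (mid.length + v.length) := by
        have := congrArg List.length heq
        simpa using this
      have hul : u'.length = u.length := by omega
      obtain ⟨hu', hmv⟩ := List.append_inj heq hul
      have hvl : v'.length = v.length := by omega
      obtain ⟨-, hv'⟩ := List.append_inj hmv rfl
      exact ⟨hu', hv'⟩
    refine ⟨mkw W k mid, ?_⟩
    set C := rho W k (mkw W k mid) B with hC
    have hCsum : C = B.sum fun w c => c • trunc W k (mid ++ w) :=
      rho_mkw_apply W k mid B (supp_ev W k b)
    -- the support of C
    have hCsupp : ∀ w ∈ C.support, IsFactor W w ∧ ∃ v' ∈ B.support, w = mid ++ v' := by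
      intro w hw
      rw [hCsum] at hw
      obtain ⟨v', hv', hw'⟩ := Finset.mem_biUnion.1 (Finsupp.support_sum hw)
      have h2 := Finsupp.support_smul hw'
      by_cases hf : IsFactor W (mid ++ v')
      · rw [trunc_of_factor W k hf] at h2
        have h3 := Finset.mem_singleton.1 (Finsupp.support_single_subset h2)
        exact ⟨h3 ▸ hf, v', hv', h3⟩
      · rw [trunc_of_nonfactor W k hf] at h2
        simp at h2
    have hCfac : ∀ w ∈ C.support, IsFactor W w := fun w hw => (hCsupp w hw).1
    -- claim 1 : C (mid ++ v) = B v
    have hC1 : C (mid ++ v) = B v := by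
      rw [hCsum, Finsupp.sum_apply, Finsupp.sum]
      rw [Finset.sum_eq_single v (fun w hwmem hwne => ?_) (fun hv => absurd hv_mem hv)]
      · rw [Finsupp.smul_apply, trunc_of_factor W k hmvfac, Finsupp.single_eq_same,
          smul_eq_mul, mul_one]
      · rw [Finsupp.smul_apply]
        by_cases hf : IsFactor W (mid ++ w)
        · rw [trunc_of_factor W k hf,
            Finsupp.single_eq_of_ne' (fun h => hwne (List.append_cancel_left h)), smul_zero]
        · rw [trunc_of_nonfactor W k hf]
          simp
    -- claim 2 : the coefficient of each term
    have hterm : ∀ u' ∈ A.support,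
        rho W k (mkw W k u') C ((u ++ mid) ++ v) = if u' = u then B v else 0 := by
      intro u' hu'
      rw [rho_mkw_apply W k u' C hCfac, Finsupp.sum_apply, Finsupp.sum]
      by_cases hequ : u' = u
      · subst hequ
        rw [if_pos rfl]
        rw [Finset.sum_eq_single (mid ++ v) (fun w hw hne => ?_) (fun hnm => ?_)]
        · rw [Finsupp.smul_apply, ← List.append_assoc, trunc_of_factor W k hw0fac,
            Finsupp.single_eq_same, smul_eq_mul, mul_one, hC1]
        · obtain ⟨-, v', hv', rfl⟩ := hCsupp w hw
          rw [Finsupp.smul_apply]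
          by_cases hf : IsFactor W (u' ++ (mid ++ v'))
          · rw [trunc_of_factor W k hf, Finsupp.single_eq_of_ne', smul_zero]
            intro heq
            exact hne (by rw [(key u' v' le_rfl (hv_max v' hv') heq).2])
          · rw [trunc_of_nonfactor W k hf]
            simp
        · rw [Finsupp.notMem_support_iff.1 hnm, zero_smul, Finsupp.zero_apply]
      · rw [if_neg hequ]
        refine Finset.sum_eq_zero fun w hw => ?_
        obtain ⟨-, v', hv', rfl⟩ := hCsupp w hw
        rw [Finsupp.smul_apply]
        by_cases hf : IsFactor W (u' ++ (mid ++ v'))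
        · rw [trunc_of_factor W k hf, Finsupp.single_eq_of_ne', smul_zero]
          intro heq
          exact hequ (key u' v' (hu_max u' hu') (hv_max v' hv') heq).1
        · rw [trunc_of_nonfactor W k hf]
          simp
    -- assembling : the coefficient of w0 in ev (a * mid * b)
    have hx : a * (mkw W k mid * b) = A.sum fun u' c => c • (mkw W k u' * (mkw W k mid * b)) := by
      conv_lhs => rw [← iota_ev W k a, Finsupp.linearCombination_apply]
      rw [Finsupp.sum, Finsupp.sum, Finset.sum_mul]
      exact Finset.sum_congr rfl fun u' _ => smul_mul_assoc _ _ _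
    have hev : ev W k (a * (mkw W k mid * b)) =
        A.sum fun u' c => c • rho W k (mkw W k u') C := by
      rw [hx, Finsupp.sum, map_sum, Finsupp.sum]
      refine Finset.sum_congr rfl fun u' _ => ?_
      rw [map_smul, ev_mul, ev_mul]
    have hcoeff : ev W k (a * (mkw W k mid * b)) ((u ++ mid) ++ v) = A u * B v := by
      rw [hev, Finsupp.sum_apply, Finsupp.sum]
      rw [Finset.sum_eq_single u (fun u' hu' hne => ?_) (fun hnm => absurd hu_mem hnm)]
      · rw [Finsupp.smul_apply, hterm u hu_mem, if_pos rfl, smul_eq_mul]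
      · rw [Finsupp.smul_apply, hterm u' hu', if_neg hne, smul_zero]
    have hne : A u * B v ≠ 0 :=
      mul_ne_zero (Finsupp.mem_support_iff.1 hu_mem) (Finsupp.mem_support_iff.1 hv_mem)
    intro h0
    rw [mul_assoc] at h0
    apply hne
    rw [← hcoeff, h0, map_zero, Finsupp.zero_apply]
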